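/- arXiv:1803.02776 — 4 statements merged into one kernel-verified Lean document; each statement's English description precedes it below -/
import Mathlib

section
/- First-order logic (over unary predicates including Active, binary predicates, and equality) is closed under the substitutions induced by all elementary actions: for every first-order sentence φ and every elementary action a among node addition, node deletion, concept addition, concept deletion, edge addition, edge deletion, global edge redirection i ≫ j, merge mrg(i,j), and clone cl(i,j,...), there exists a first-order sentence ψ (with no substitution operator) such that for all graphs G, G ⊨ ψ if and only if G[a] ⊨ φ. -/
/-- First-order interpretations induced by logically decorated graphs: a domain `V`
(containing the node set), the distinguished unary predicate `Active` (the node set),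
unary predicates (concepts) `C` and binary predicates (roles) `R`. -/
structure FOInterp (V C R : Type) where
  active : Set V
  conc : C → Set V
  rel : R → Set (V × V)

/-- First-order terms: variables and node constants. -/
inductive Tm (V : Type) where
  | var : ℕ → Tm V
  | cst : V → Tm V

def evalTm {V : Type} (v : ℕ → V) : Tm V → V
  | .var n => v n
  | .cst x => x

def freeTm {V : Type} : Tm V → Set ℕ
  | .var n => {n}
  | .cst _ => ∅

/-- First-order formulas over unary predicates (including `Active`), binary
predicates and equality. -/
inductive FO (V C R : Type) where
  | tru : FO V C R
  | act (t : Tm V) : FO V C R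
  | conc (c : C) (t : Tm V) : FO V C R
  | rel (r : R) (t u : Tm V) : FO V C R
  | eq (t u : Tm V) : FO V C R
  | not (φ : FO V C R) : FO V C R
  | or (φ ψ : FO V C R) : FO V C R
  | ex (x : ℕ) (φ : FO V C R) : FO V C R

/-- Free variables of a formula. -/
def freeV {V C R : Type} : FO V C R → Set ℕ
  | .tru => ∅
  | .act t => freeTm t
  | .conc _ t => freeTm t
  | .rel _ t u => freeTm t ∪ freeTm u
  | .eq t u => freeTm t ∪ freeTm u
  | .not φ => freeV φ
  | .or φ ψ => freeV φ ∪ freeV ψ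
  | .ex x φ => freeV φ \ {x}

/-- Satisfaction of a first-order formula in an interpretation under a valuation. -/
def Sat {V C R : Type} (I : FOInterp V C R) : (ℕ → V) → FO V C R → Prop
  | _, .tru => True
  | v, .act t => evalTm v t ∈ I.active
  | v, .conc c t => evalTm v t ∈ I.conc c
  | v, .rel r t u => (evalTm v t, evalTm v u) ∈ I.rel r
  | v, .eq t u => evalTm v t = evalTm v u
  | v, .not φ => ¬ Sat I v φ
  | v, .or φ ψ => Sat I v φ ∨ Sat I v ψ
  | v, .ex x φ => ∃ n : V, Sat I (Function.update v x n) φ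

/-- The elementary actions. -/
inductive EAct (V C R : Type) where
  | addN (i : V)
  | delN (i : V)
  | addC (i : V) (c : C)
  | delC (i : V) (c : C)
  | addE (i j : V) (r : R)
  | delE (i j : V) (r : R)
  | redir (i j : V)                                  -- global edge redirection i ≫ j
  | merge (i j : V)                                  -- mrg(i,j)
  | clone (i j : V) (Lin Lout Llin Llout Lll : Set R) -- cl(i,j,…)

/-- The effect of an elementary action on the induced first-order interpretation
(`C0` is the set of basic concepts, used by cloning). -/
def applyA {V C R : Type} (C0 : Set C) (I : FOInterp V C R) : EAct V C R → FOInterp V C R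
  | .addN i => { I with active := I.active ∪ {i} }
  | .delN i =>
      { active := I.active \ {i},
        conc := fun c => I.conc c \ {i},
        rel := fun r => {p ∈ I.rel r | p.1 ≠ i ∧ p.2 ≠ i} }
  | .addC i c => { I with conc := fun c' => I.conc c' ∪ {x | x = i ∧ c' = c} }
  | .delC i c => { I with conc := fun c' => I.conc c' \ {x | x = i ∧ c' = c} }
  | .addE i j r => { I with rel := fun r' => I.rel r' ∪ {p | p = (i, j) ∧ r' = r} }
  | .delE i j r => { I with rel := fun r' => I.rel r' \ {p | p = (i, j) ∧ r' = r} }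
  | .redir i j =>
      { I with rel := fun r =>
          {p | (p ∈ I.rel r ∧ p.2 ≠ i) ∨ ((p.1, i) ∈ I.rel r ∧ p.2 = j)} }
  | .merge i j =>
      { active := I.active \ {j},
        conc := fun c => {x | x ≠ j ∧ (x ∈ I.conc c ∨ (x = i ∧ j ∈ I.conc c))},
        rel := fun r => {p | p.1 ≠ j ∧ p.2 ≠ j ∧
          (p ∈ I.rel r ∨ ((p.1, j) ∈ I.rel r ∧ p.2 = i) ∨
           ((j, p.2) ∈ I.rel r ∧ p.1 = i) ∨
           (p.1 = i ∧ p.2 = i ∧ (j, j) ∈ I.rel r))} }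
  | .clone i j Lin Lout Llin Llout Lll =>
      { active := I.active ∪ {j},
        conc := fun c => I.conc c ∪ {x | x = j ∧ c ∈ C0 ∧ i ∈ I.conc c},
        rel := fun r => I.rel r ∪ {p |
          (r ∈ Lin ∧ (p.1, i) ∈ I.rel r ∧ p.1 ≠ i ∧ p.2 = j) ∨
          (r ∈ Lout ∧ (i, p.2) ∈ I.rel r ∧ p.2 ≠ i ∧ p.1 = j) ∨
          (r ∈ Llin ∧ (i, i) ∈ I.rel r ∧ p.1 = i ∧ p.2 = j) ∨
          (r ∈ Llout ∧ (i, i) ∈ I.rel r ∧ p.1 = j ∧ p.2 = i) ∨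
          (r ∈ Lll ∧ (i, i) ∈ I.rel r ∧ p.1 = j ∧ p.2 = j)} }

open scoped Classical

namespace FOsub
variable {V C R : Type}

def fand (φ ψ : FO V C R) : FO V C R := .not (.or (.not φ) (.not ψ))
def fls : FO V C R := .not .tru

@[simp] lemma sat_fand (I : FOInterp V C R) (v : ℕ → V) (φ ψ : FO V C R) :
    Sat I v (fand φ ψ) ↔ Sat I v φ ∧ Sat I v ψ := by
  simp [fand, Sat]

@[simp] lemma sat_fls (I : FOInterp V C R) (v : ℕ → V) :
    Sat I v (fls : FO V C R) ↔ False := by simp [fls, Sat]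

@[simp] lemma freeV_fand (φ ψ : FO V C R) :
    freeV (fand φ ψ) = freeV φ ∪ freeV ψ := by simp [fand, freeV]

@[simp] lemma freeV_fls : freeV (fls : FO V C R) = ∅ := by simp [fls, freeV]

def trAct (a : EAct V C R) (t : Tm V) : FO V C R :=
  match a with
  | .addN i => .or (.act t) (.eq t (.cst i))
  | .delN i => fand (.act t) (.not (.eq t (.cst i)))
  | .addC _ _ => .act t
  | .delC _ _ => .act t
  | .addE _ _ _ => .act t
  | .delE _ _ _ => .act t
  | .redir _ _ => .act t
  | .merge _ j => fand (.act t) (.not (.eq t (.cst j)))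
  | .clone _ j _ _ _ _ _ => .or (.act t) (.eq t (.cst j))

noncomputable def trConc (C0 : Set C) (a : EAct V C R) (c : C) (t : Tm V) : FO V C R :=
  match a with
  | .addN _ => .conc c t
  | .delN i => fand (.conc c t) (.not (.eq t (.cst i)))
  | .addC i c' => if c = c' then .or (.conc c t) (.eq t (.cst i)) else .conc c t
  | .delC i c' => if c = c' then fand (.conc c t) (.not (.eq t (.cst i))) else .conc c t
  | .addE _ _ _ => .conc c t
  | .delE _ _ _ => .conc c t
  | .redir _ _ => .conc c t
  | .merge i j => fand (.not (.eq t (.cst j)))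
      (.or (.conc c t) (fand (.eq t (.cst i)) (.conc c (.cst j))))
  | .clone i j _ _ _ _ _ =>
      if c ∈ C0 then .or (.conc c t) (fand (.eq t (.cst j)) (.conc c (.cst i)))
      else .conc c t

noncomputable def trRel (a : EAct V C R) (r : R) (t u : Tm V) : FO V C R :=
  match a with
  | .addN _ => .rel r t u
  | .delN i => fand (.rel r t u)
      (fand (.not (.eq t (.cst i))) (.not (.eq u (.cst i))))
  | .addC _ _ => .rel r t u
  | .delC _ _ => .rel r t u
  | .addE i j r' => if r = r' then
      .or (.rel r t u) (fand (.eq t (.cst i)) (.eq u (.cst j))) else .rel r t u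
  | .delE i j r' => if r = r' then
      fand (.rel r t u) (.not (fand (.eq t (.cst i)) (.eq u (.cst j)))) else .rel r t u
  | .redir i j => .or (fand (.rel r t u) (.not (.eq u (.cst i))))
      (fand (.rel r t (.cst i)) (.eq u (.cst j)))
  | .merge i j => fand (.not (.eq t (.cst j))) (fand (.not (.eq u (.cst j)))
      (.or (.rel r t u) (.or (fand (.rel r t (.cst j)) (.eq u (.cst i)))
        (.or (fand (.rel r (.cst j) u) (.eq t (.cst i)))
          (fand (.eq t (.cst i)) (fand (.eq u (.cst i)) (.rel r (.cst j) (.cst j))))))))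
  | .clone i j Lin Lout Llin Llout Lll =>
      .or (.rel r t u) (.or
        (if r ∈ Lin then fand (.rel r t (.cst i))
            (fand (.not (.eq t (.cst i))) (.eq u (.cst j))) else fls) (.or
        (if r ∈ Lout then fand (.rel r (.cst i) u)
            (fand (.not (.eq u (.cst i))) (.eq t (.cst j))) else fls) (.or
        (if r ∈ Llin then fand (.rel r (.cst i) (.cst i))
            (fand (.eq t (.cst i)) (.eq u (.cst j))) else fls) (.or
        (if r ∈ Llout then fand (.rel r (.cst i) (.cst i))
            (fand (.eq t (.cst j)) (.eq u (.cst i))) else fls)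
        (if r ∈ Lll then fand (.rel r (.cst i) (.cst i))
            (fand (.eq t (.cst j)) (.eq u (.cst j))) else fls)))))

noncomputable def tr (C0 : Set C) (a : EAct V C R) : FO V C R → FO V C R
  | .tru => .tru
  | .act t => trAct a t
  | .conc c t => trConc C0 a c t
  | .rel r t u => trRel a r t u
  | .eq t u => .eq t u
  | .not φ => .not (tr C0 a φ)
  | .or φ ψ => .or (tr C0 a φ) (tr C0 a ψ)
  | .ex x φ => .ex x (tr C0 a φ)

lemma freeV_trAct (a : EAct V C R) (t : Tm V) :
    freeV (trAct a t) ⊆ freeTm t := by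
  cases a <;> simp [trAct, freeV, freeTm]

lemma freeV_trConc (C0 : Set C) (a : EAct V C R) (c : C) (t : Tm V) :
    freeV (trConc C0 a c t) ⊆ freeTm t := by
  cases a <;> simp only [trConc] <;> (repeat' split) <;> simp [freeV, freeTm]

lemma freeV_trRel (a : EAct V C R) (r : R) (t u : Tm V) :
    freeV (trRel a r t u) ⊆ freeTm t ∪ freeTm u := by
  cases a <;> simp only [trRel] <;> (repeat' split) <;>
    simp [freeV, freeTm]

lemma freeV_tr (C0 : Set C) (a : EAct V C R) (φ : FO V C R) :
    freeV (tr C0 a φ) ⊆ freeV φ := by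
  induction φ with
  | tru => simp [tr, freeV]
  | act t => exact freeV_trAct a t
  | conc c t => exact freeV_trConc C0 a c t
  | rel r t u => exact freeV_trRel a r t u
  | eq t u => simp [tr, freeV]
  | not φ ih => simpa [tr, freeV] using ih
  | or φ ψ ih1 ih2 => simp only [tr, freeV]; exact Set.union_subset_union ih1 ih2
  | ex x φ ih => simp only [tr, freeV]; exact Set.diff_subset_diff_left ih

lemma sat_trAct (C0 : Set C) (I : FOInterp V C R) (a : EAct V C R) (v : ℕ → V)
    (t : Tm V) : Sat I v (trAct a t) ↔ evalTm v t ∈ (applyA C0 I a).active := by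
  cases a <;> simp [trAct, applyA, Sat, evalTm] <;> tauto

lemma sat_trConc (C0 : Set C) (I : FOInterp V C R) (a : EAct V C R) (v : ℕ → V)
    (c : C) (t : Tm V) :
    Sat I v (trConc C0 a c t) ↔ evalTm v t ∈ (applyA C0 I a).conc c := by
  cases a <;> simp only [trConc] <;> (repeat' split) <;>
    simp_all [applyA, Sat, evalTm] <;> tauto

lemma sat_trRel (C0 : Set C) (I : FOInterp V C R) (a : EAct V C R) (v : ℕ → V)
    (r : R) (t u : Tm V) :
    Sat I v (trRel a r t u) ↔ (evalTm v t, evalTm v u) ∈ (applyA C0 I a).rel r := by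
  cases a <;> simp only [trRel] <;> (repeat' split) <;>
    simp_all [applyA, Sat, evalTm] <;> tauto

lemma sat_tr (C0 : Set C) (a : EAct V C R) (φ : FO V C R) :
    ∀ (I : FOInterp V C R) (v : ℕ → V),
      Sat I v (tr C0 a φ) ↔ Sat (applyA C0 I a) v φ := by
  induction φ with
  | tru => intro I v; simp [tr, Sat]
  | act t => intro I v; simpa [tr, Sat] using sat_trAct C0 I a v t
  | conc c t => intro I v; simpa [tr, Sat] using sat_trConc C0 I a v c t
  | rel r t u => intro I v; simpa [tr, Sat] using sat_trRel C0 I a v r t u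
  | eq t u => intro I v; simp [tr, Sat]
  | not φ ih => intro I v; simp [tr, Sat, ih]
  | or φ ψ ih1 ih2 => intro I v; simp [tr, Sat, ih1, ih2]
  | ex x φ ih => intro I v; simp only [tr, Sat]; exact exists_congr fun n => ih I _

end FOsub

/-- First-order logic is closed under the substitutions induced by all elementary
actions: for every sentence `φ` and elementary action `a` there is a sentence `ψ`
(without substitution operator) such that for all graphs `G`, `G ⊨ ψ ⟺ G[a] ⊨ φ`. -/
theorem fo_closed_under_substitutions {V C R : Type}
    (C0 : Set C) (a : EAct V C R) (φ : FO V C R) (hφ : freeV φ = ∅) :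
    ∃ ψ : FO V C R, freeV ψ = ∅ ∧
      ∀ (I : FOInterp V C R) (v : ℕ → V), Sat I v ψ ↔ Sat (applyA C0 I a) v φ := by
  refine ⟨FOsub.tr C0 a φ, ?_, fun I v => FOsub.sat_tr C0 a φ I v⟩
  have := FOsub.freeV_tr C0 a φ
  rw [hφ] at this
  exact Set.subset_empty_iff.mp this
end

section
/- An ALCQUO-bisimulation preserves all ALCQUO concepts: if Z is an ALCQUO-bisimulation between interpretations I₁ and I₂, then for every ALCQUO concept C and all x₁ ∈ Δ₁, x₂ ∈ Δ₂ with x₁ Z x₂, we have x₁ ∈ C^{I₁} if and only if x₂ ∈ C^{I₂}. -/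
/-- An interpretation for description logics with atomic concepts `C`, roles `R`
and nominals `O`, over domain `Δ`. -/
structure DLI (C R O Δ : Type) where
  conc : C → Set Δ
  rel : R → Set (Δ × Δ)
  nom : O → Δ

/-- ALCQUO concepts: ⊤, atomic concepts, nominals, ¬, ∨, ∃R.C, the universal role
∃U.C, and counting quantifiers (< n R C). -/
inductive CQ (C R O : Type) where
  | top : CQ C R O
  | atom (c : C) : CQ C R O
  | nomC (o : O) : CQ C R O
  | neg (φ : CQ C R O) : CQ C R O
  | or (φ ψ : CQ C R O) : CQ C R O
  | ex (r : R) (φ : CQ C R O) : CQ C R O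
  | exU (φ : CQ C R O) : CQ C R O
  | lt (n : ℕ) (r : R) (φ : CQ C R O) : CQ C R O

/-- Satisfaction of an ALCQUO concept at an element of an interpretation.
`(< n R φ)` holds at `d` iff `d` has fewer than `n` `R`-successors satisfying `φ`. -/
def dsat {C R O Δ : Type} (I : DLI C R O Δ) : Δ → CQ C R O → Prop
  | _, .top => True
  | d, .atom c => d ∈ I.conc c
  | d, .nomC o => d = I.nom o
  | d, .neg φ => ¬ dsat I d φ
  | d, .or φ ψ => dsat I d φ ∨ dsat I d ψ
  | d, .ex r φ => ∃ d', (d, d') ∈ I.rel r ∧ dsat I d' φ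
  | _, .exU φ => ∃ d', dsat I d' φ
  | d, .lt n r φ =>
      ¬ ∃ f : Fin n → Δ, Function.Injective f ∧ ∀ k, (d, f k) ∈ I.rel r ∧ dsat I (f k) φ

/-- `Z` is an ALCQUO-bisimulation between `I` and `J`. -/
structure IsBisim {C R O Δ₁ Δ₂ : Type} (I : DLI C R O Δ₁) (J : DLI C R O Δ₂)
    (Z : Δ₁ → Δ₂ → Prop) : Prop where
  nonempty : ∃ d₁ d₂, Z d₁ d₂
  alc1 : ∀ d₁ d₂, Z d₁ d₂ → ∀ c, d₁ ∈ I.conc c ↔ d₂ ∈ J.conc c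
  alc2 : ∀ d₁ d₂ e₁ r, Z d₁ d₂ → (d₁, e₁) ∈ I.rel r → ∃ e₂, (d₂, e₂) ∈ J.rel r ∧ Z e₁ e₂
  alc3 : ∀ d₁ d₂ e₂ r, Z d₁ d₂ → (d₂, e₂) ∈ J.rel r → ∃ e₁, (d₁, e₁) ∈ I.rel r ∧ Z e₁ e₂
  alc4 : ∀ o, Z (I.nom o) (J.nom o)
  nomO : ∀ d₁ d₂, Z d₁ d₂ → ∀ o, (d₁ = I.nom o ↔ d₂ = J.nom o)
  u1 : ∀ d₁, ∃ d₂, Z d₁ d₂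
  u2 : ∀ d₂, ∃ d₁, Z d₁ d₂
  q : ∀ d₁ d₂ r, Z d₁ d₂ →
      (∀ e₁, (d₁, e₁) ∈ I.rel r → ∃! e₂, ((d₂, e₂) ∈ J.rel r ∧ Z e₁ e₂)) ∧
      (∀ e₂, (d₂, e₂) ∈ J.rel r → ∃! e₁, ((d₁, e₁) ∈ I.rel r ∧ Z e₁ e₂))

/-- An ALCQUO-bisimulation preserves all ALCQUO concepts. -/
theorem bisim_invariance {C R O Δ₁ Δ₂ : Type}
    (I : DLI C R O Δ₁) (J : DLI C R O Δ₂) (Z : Δ₁ → Δ₂ → Prop)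
    (h : IsBisim I J Z) :
    ∀ (φ : CQ C R O) (x₁ : Δ₁) (x₂ : Δ₂), Z x₁ x₂ → (dsat I x₁ φ ↔ dsat J x₂ φ) := by
  intro φ
  induction φ with
  | top => intro x₁ x₂ _; simp [dsat]
  | atom c => intro x₁ x₂ hz; exact h.alc1 x₁ x₂ hz c
  | nomC o => intro x₁ x₂ hz; exact h.nomO x₁ x₂ hz o
  | neg φ ih => intro x₁ x₂ hz; simp only [dsat]; exact not_congr (ih x₁ x₂ hz)
  | or φ ψ ihφ ihψ =>
      intro x₁ x₂ hz; simp only [dsat]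
      exact or_congr (ihφ x₁ x₂ hz) (ihψ x₁ x₂ hz)
  | ex r φ ih =>
      intro x₁ x₂ hz
      constructor
      · rintro ⟨d', hd, hφ⟩
        obtain ⟨e₂, he, hz'⟩ := h.alc2 x₁ x₂ d' r hz hd
        exact ⟨e₂, he, (ih d' e₂ hz').mp hφ⟩
      · rintro ⟨d', hd, hφ⟩
        obtain ⟨e₁, he, hz'⟩ := h.alc3 x₁ x₂ d' r hz hd
        exact ⟨e₁, he, (ih e₁ d' hz').mpr hφ⟩
  | exU φ ih =>
      intro x₁ x₂ _
      constructor
      · rintro ⟨d', hφ⟩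
        obtain ⟨e₂, hz'⟩ := h.u1 d'
        exact ⟨e₂, (ih d' e₂ hz').mp hφ⟩
      · rintro ⟨d', hφ⟩
        obtain ⟨e₁, hz'⟩ := h.u2 d'
        exact ⟨e₁, (ih e₁ d' hz').mpr hφ⟩
  | lt n r φ ih =>
      intro x₁ x₂ hz
      obtain ⟨q1, q2⟩ := h.q x₁ x₂ r hz
      simp only [dsat]
      apply not_congr
      constructor
      · rintro ⟨f, hinj, hf⟩
        choose g hg hzg using fun k => (q1 (f k) (hf k).1).exists
        refine ⟨g, ?_, fun k => ⟨hg k, (ih (f k) (g k) (hzg k)).mp (hf k).2⟩⟩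
        intro k k' hkk
        apply hinj
        obtain ⟨e₁, -, hu⟩ := q2 (g k) (hg k)
        rw [hu (f k) ⟨(hf k).1, hzg k⟩, hu (f k') ⟨(hf k').1, hkk ▸ hzg k'⟩]
      · rintro ⟨f, hinj, hf⟩
        choose g hg hzg using fun k => (q2 (f k) (hf k).1).exists
        refine ⟨g, ?_, fun k => ⟨hg k, (ih (g k) (f k) (hzg k)).mpr (hf k).2⟩⟩
        intro k k' hkk
        apply hinj
        obtain ⟨e₂, -, hu⟩ := q1 (g k) (hg k)
        rw [hu (f k) ⟨(hf k).1, hzg k⟩, hu (f k') ⟨(hf k').1, hkk ▸ hzg k'⟩]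
end

section
/- The logic ALCQUO is not closed under the substitution induced by the merge action: there exist two finite interpretations I, J related by an ALCQUO-bisimulation and related elements d₁ Z d₁' such that, after performing mrg(i,j) in both, d₁ satisfies the concept (≥ 2 R C) while d₁' does not; consequently no ALCQUO concept is equivalent to (≥ 2 R C)[mrg(i,j)]. -/
/-- The effect of the merge action `mrg(i,j)` (fusing the node denoted by the
nominal `j` into the one denoted by `i`) on an interpretation: `j`'s denotation is
removed from all concepts and roles, its labels are given to `i` and all its edge
endpoints are redirected to `i`. -/
def mergeDL {C R O Δ : Type} (I : DLI C R O Δ) (i j : O) : DLI C R O Δ where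
  conc := fun c => {x | x ≠ I.nom j ∧ (x ∈ I.conc c ∨ (x = I.nom i ∧ I.nom j ∈ I.conc c))}
  rel := fun r => {p | p.1 ≠ I.nom j ∧ p.2 ≠ I.nom j ∧
      (p ∈ I.rel r ∨ ((p.1, I.nom j) ∈ I.rel r ∧ p.2 = I.nom i) ∨
       ((I.nom j, p.2) ∈ I.rel r ∧ p.1 = I.nom i) ∨
       (p.1 = I.nom i ∧ p.2 = I.nom i ∧ (I.nom j, I.nom j) ∈ I.rel r))}
  nom := I.nom

/-- The interpretation `I`: domain `{d₁,d₂,d₃,d₄} = Fin 4`, `i = d₁ = 0`,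
`j = d₂ = 1`, `C = {d₃,d₄} = {2,3}`, `R = {(d₁,d₃),(d₂,d₄)}`. -/
def I₁ : DLI Unit Unit Bool (Fin 4) where
  conc := fun _ => {2, 3}
  rel := fun _ => {((0 : Fin 4), (2 : Fin 4)), ((1 : Fin 4), (3 : Fin 4))}
  nom := fun b => bif b then 1 else 0

/-- The interpretation `J`: domain `{d₁',d₂',d₃'} = Fin 3`, `i = d₁' = 0`,
`j = d₂' = 1`, `C = {d₃'} = {2}`, `R = {(d₁',d₃'),(d₂',d₃')}`. -/
def J₁ : DLI Unit Unit Bool (Fin 3) where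
  conc := fun _ => {2}
  rel := fun _ => {((0 : Fin 3), (2 : Fin 3)), ((1 : Fin 3), (2 : Fin 3))}
  nom := fun b => bif b then 1 else 0

/-- The concept `(≥ 2 R C)`. -/
def geq2RC : CQ Unit Unit Bool := .neg (.lt 2 () (.atom ()))

theorem bisim_inv {C R O Δ₁ Δ₂ : Type} {I : DLI C R O Δ₁} {J : DLI C R O Δ₂}
    {Z : Δ₁ → Δ₂ → Prop} (h : IsBisim I J Z) :
    ∀ φ d₁ d₂, Z d₁ d₂ → (dsat I d₁ φ ↔ dsat J d₂ φ) := by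
  intro φ
  induction φ with
  | top => intro d₁ d₂ _; simp [dsat]
  | atom c => intro d₁ d₂ hz; exact h.alc1 _ _ hz c
  | nomC o => intro d₁ d₂ hz; exact h.nomO _ _ hz o
  | neg φ ih => intro d₁ d₂ hz; exact not_congr (ih _ _ hz)
  | or φ ψ ih1 ih2 => intro d₁ d₂ hz; exact or_congr (ih1 _ _ hz) (ih2 _ _ hz)
  | ex r φ ih =>
      intro d₁ d₂ hz
      constructor
      · rintro ⟨e₁, he, hs⟩
        obtain ⟨e₂, he₂, hz₂⟩ := h.alc2 _ _ _ r hz he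
        exact ⟨e₂, he₂, (ih _ _ hz₂).1 hs⟩
      · rintro ⟨e₂, he, hs⟩
        obtain ⟨e₁, he₁, hz₁⟩ := h.alc3 _ _ _ r hz he
        exact ⟨e₁, he₁, (ih _ _ hz₁).2 hs⟩
  | exU φ ih =>
      intro d₁ d₂ _
      constructor
      · rintro ⟨e₁, hs⟩
        obtain ⟨e₂, hz₂⟩ := h.u1 e₁
        exact ⟨e₂, (ih _ _ hz₂).1 hs⟩
      · rintro ⟨e₂, hs⟩
        obtain ⟨e₁, hz₁⟩ := h.u2 e₂
        exact ⟨e₁, (ih _ _ hz₁).2 hs⟩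
  | lt n r φ ih =>
      intro d₁ d₂ hz
      apply not_congr
      constructor
      · rintro ⟨f, hinj, hf⟩
        have hq := (h.q d₁ d₂ r hz).1
        choose g hg hzg using fun k => (hq (f k) (hf k).1).exists
        refine ⟨g, ?_, fun k => ⟨hg k, (ih _ _ (hzg k)).1 (hf k).2⟩⟩
        intro k k' hkk
        have hu := (h.q d₁ d₂ r hz).2 (g k) (hg k)
        obtain ⟨e₁, _, huniq⟩ := hu
        have h1 : f k = e₁ := huniq _ ⟨(hf k).1, hzg k⟩
        have h2 : f k' = e₁ := huniq _ ⟨(hf k').1, hkk ▸ hzg k'⟩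
        exact hinj (h1.trans h2.symm)
      · rintro ⟨g, hinj, hg⟩
        have hq := (h.q d₁ d₂ r hz).2
        choose f hf hzf using fun k => (hq (g k) (hg k).1).exists
        refine ⟨f, ?_, fun k => ⟨hf k, (ih _ _ (hzf k)).2 (hg k).2⟩⟩
        intro k k' hkk
        have hu := (h.q d₁ d₂ r hz).1 (f k) (hf k)
        obtain ⟨e₂, _, huniq⟩ := hu
        have h1 : g k = e₂ := huniq _ ⟨(hg k).1, hzf k⟩
        have h2 : g k' = e₂ := huniq _ ⟨(hg k').1, hkk ▸ hzf k'⟩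
        exact hinj (h1.trans h2.symm)
def Z₁ : Fin 4 → Fin 3 → Prop := fun a b =>
  (a = 0 ∧ b = 0) ∨ (a = 1 ∧ b = 1) ∨ (a = 2 ∧ b = 2) ∨ (a = 3 ∧ b = 2)

theorem bisim₁ : IsBisim I₁ J₁ Z₁ := by
  constructor
  · exact ⟨0, 0, Or.inl ⟨rfl, rfl⟩⟩
  · intro d₁ d₂ hz c
    rcases hz with ⟨h1,h2⟩|⟨h1,h2⟩|⟨h1,h2⟩|⟨h1,h2⟩ <;> subst h1 <;> subst h2 <;>
      simp [I₁, J₁]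
  · intro d₁ d₂ e₁ r hz he
    rcases hz with ⟨h1,h2⟩|⟨h1,h2⟩|⟨h1,h2⟩|⟨h1,h2⟩ <;> subst h1 <;> subst h2 <;>
      simp_all [I₁, J₁, Z₁, Prod.ext_iff] <;> rcases he with ⟨h1,h2⟩|⟨h1,h2⟩ <;> simp_all
  · intro d₁ d₂ e₂ r hz he
    rcases hz with ⟨h1,h2⟩|⟨h1,h2⟩|⟨h1,h2⟩|⟨h1,h2⟩ <;> subst h1 <;> subst h2 <;>
      simp_all [I₁, J₁, Z₁, Prod.ext_iff] <;> rcases he with ⟨h1,h2⟩|⟨h1,h2⟩ <;> simp_all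
  · intro o; cases o <;> simp [I₁, J₁, Z₁]
  · intro d₁ d₂ hz o
    rcases hz with ⟨h1,h2⟩|⟨h1,h2⟩|⟨h1,h2⟩|⟨h1,h2⟩ <;> subst h1 <;> subst h2 <;>
      cases o <;> simp [I₁, J₁] <;> decide
  · intro d₁; fin_cases d₁
    · exact ⟨0, Or.inl ⟨rfl, rfl⟩⟩
    · exact ⟨1, Or.inr (Or.inl ⟨rfl, rfl⟩)⟩
    · exact ⟨2, Or.inr (Or.inr (Or.inl ⟨rfl, rfl⟩))⟩
    · exact ⟨2, Or.inr (Or.inr (Or.inr ⟨rfl, rfl⟩))⟩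
  · intro d₂; fin_cases d₂
    · exact ⟨0, Or.inl ⟨rfl, rfl⟩⟩
    · exact ⟨1, Or.inr (Or.inl ⟨rfl, rfl⟩)⟩
    · exact ⟨2, Or.inr (Or.inr (Or.inl ⟨rfl, rfl⟩))⟩
  · intro d₁ d₂ r hz
    rcases hz with ⟨h1,h2⟩|⟨h1,h2⟩|⟨h1,h2⟩|⟨h1,h2⟩ <;> subst h1 <;> subst h2 <;> constructor <;>
      intro e he <;> simp_all [I₁, J₁, Prod.ext_iff] <;> exact ⟨_, ⟨rfl, by simp [Z₁]⟩, fun y hy => hy.1⟩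
theorem satI : dsat (mergeDL I₁ false true) 0 geq2RC := by
  simp only [geq2RC, dsat, not_not]
  refine ⟨![2, 3], by decide, ?_⟩
  intro k
  fin_cases k <;> constructor <;>
    simp [mergeDL, I₁, dsat, Prod.ext_iff]

theorem satJ : ¬ dsat (mergeDL J₁ false true) 0 geq2RC := by
  simp only [geq2RC, dsat, not_not]
  rintro ⟨f, hinj, hf⟩
  have key : ∀ k : Fin 2, f k = 2 := by
    intro k
    have he := (hf k).1
    simp [mergeDL, J₁, Prod.ext_iff] at he
    exact he.2
  exact absurd (hinj ((key 0).trans (key 1).symm)) (by decide)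

/-- ALCQUO is not closed under the substitution induced by merge: the finite
interpretations `I₁` and `J₁` are ALCQUO-bisimilar at `d₁` and `d₁'`, yet after
performing `mrg(i,j)` in both, `d₁` satisfies `(≥ 2 R C)` while `d₁'` does not;
consequently no ALCQUO concept is equivalent to `(≥ 2 R C)[mrg(i,j)]`. -/
theorem ALCQUO_not_closed_under_merge :
    (∃ Z : Fin 4 → Fin 3 → Prop, IsBisim I₁ J₁ Z ∧ Z 0 0 ∧
        dsat (mergeDL I₁ false true) 0 geq2RC ∧
        ¬ dsat (mergeDL J₁ false true) 0 geq2RC) ∧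
    ¬ ∃ φ : CQ Unit Unit Bool,
        ∀ (Δ : Type) (I : DLI Unit Unit Bool Δ) (d : Δ),
          dsat I d φ ↔ dsat (mergeDL I false true) d geq2RC := by
  constructor
  · exact ⟨Z₁, bisim₁, Or.inl ⟨rfl, rfl⟩, satI, satJ⟩
  · rintro ⟨φ, hφ⟩
    have h1 := (hφ (Fin 4) I₁ 0).2 satI
    have h2 := (bisim_inv bisim₁ φ 0 0 (Or.inl ⟨rfl, rfl⟩)).1 h1
    exact satJ ((hφ (Fin 3) J₁ 0).1 h2)
end

section
/- For any graph G, role R, nodes i, j with no edge from i to j labeled R, and any element n with n = i: if the unique added pair makes j a new R-successor of i, then n ∈ ((< m R φ))^{G[add_E(e,i,j,R)]} if and only if (when j ∈ φ^{G[add_E(e,i,j,R)]} and (i,j) ∉ R^G) n ∈ (< (m−1) R φ[add_E(e,i,j,R)])^G, and otherwise n ∈ (< m R φ[add_E(e,i,j,R)])^G. For n ≠ i, n satisfies (< m R φ) in G[add_E(e,i,j,R)] iff n ∈ (< m R φ[add_E(e,i,j,R)])^G. -/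
structure LDGraph (V Ed C R : Type) where
  N : Set V
  E : Set Ed
  phiN : V → Set C
  phiE : Ed → R
  src : Ed → V
  tgt : Ed → V

def roleInterp {V Ed C R : Type} (G : LDGraph V Ed C R) (r : R) : Set (V × V) :=
  {p | ∃ e ∈ G.E, G.src e = p.1 ∧ G.tgt e = p.2 ∧ G.phiE e = r}

/-- Edge addition `add_E(e,i,j,r)`: adds the fresh edge `e` with source `i`,
target `j` and label `r`. -/
def LDGraph.addE {V Ed C R : Type} [DecidableEq Ed] (G : LDGraph V Ed C R)
    (e : Ed) (i j : V) (r : R) : LDGraph V Ed C R where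
  N := G.N
  E := insert e G.E
  phiN := G.phiN
  phiE := fun x => if x = e then r else G.phiE x
  src := fun x => if x = e then i else G.src x
  tgt := fun x => if x = e then j else G.tgt x

/-- `n` satisfies the counting concept `(< m R P)` in `G`: `n` has fewer than `m`
distinct `R`-successors belonging to `P`. -/
def countLT {V Ed C R : Type} (G : LDGraph V Ed C R) (r : R) (P : Set V) (m : ℕ)
    (n : V) : Prop :=
  ¬ ∃ f : Fin m → V, Function.Injective f ∧ ∀ k, (n, f k) ∈ roleInterp G r ∧ f k ∈ P

lemma mem_roleInterp_addE' {V Ed C R : Type} [DecidableEq Ed]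
    (G : LDGraph V Ed C R) (e : Ed) (i j : V) (r : R) (he : e ∉ G.E) (p : V × V) :
    p ∈ roleInterp (G.addE e i j r) r ↔ p = (i, j) ∨ p ∈ roleInterp G r := by
  constructor
  · rintro ⟨e', he', hs, ht, hl⟩
    rcases he' with rfl | he'
    · left
      simp [LDGraph.addE] at hs ht
      exact Prod.ext hs.symm ht.symm
    · right
      have hne' : e' ≠ e := fun h => he (h ▸ he')
      refine ⟨e', he', ?_, ?_, ?_⟩
      · simpa [LDGraph.addE, hne'] using hs
      · simpa [LDGraph.addE, hne'] using ht
      · simpa [LDGraph.addE, hne'] using hl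
  · rintro (rfl | ⟨e', he', hs, ht, hl⟩)
    · exact ⟨e, Set.mem_insert _ _, by simp [LDGraph.addE]⟩
    · have hne' : e' ≠ e := fun h => he (h ▸ he')
      exact ⟨e', Set.mem_insert_of_mem _ he', by simp [LDGraph.addE, hne', hs, ht, hl]⟩

lemma hasInj_iff_finset {V : Type} (S : Set V) (m : ℕ) :
    (∃ f : Fin m → V, Function.Injective f ∧ ∀ k, f k ∈ S) ↔
    ∃ T : Finset V, T.card = m ∧ ↑T ⊆ S := by
  classical
  constructor
  · rintro ⟨f, hf, hmem⟩
    refine ⟨Finset.univ.image f, ?_, ?_⟩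
    · rw [Finset.card_image_of_injective _ hf, Finset.card_univ, Fintype.card_fin]
    · intro x hx
      simp only [Finset.coe_image, Set.mem_image] at hx
      obtain ⟨k, _, rfl⟩ := hx
      exact hmem k
  · rintro ⟨T, hc, hsub⟩
    let eqv := T.equivFinOfCardEq hc
    refine ⟨fun k => (eqv.symm k : V), ?_, ?_⟩
    · exact Subtype.val_injective.comp eqv.symm.injective
    · intro k; exact hsub (eqv.symm k).2

lemma finset_insert_shift {V : Type} (S : Set V) (j : V) (hj : j ∉ S) (m : ℕ)
    (hm : 1 ≤ m) :
    (∃ T : Finset V, T.card = m ∧ ↑T ⊆ insert j S) ↔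
    (∃ T : Finset V, T.card = m - 1 ∧ ↑T ⊆ S) := by
  classical
  constructor
  · rintro ⟨T, hc, hsub⟩
    have herase : ↑(T.erase j) ⊆ S := by
      intro x hx
      simp only [Finset.coe_erase, Set.mem_diff, Set.mem_singleton_iff] at hx
      rcases hsub hx.1 with h | h
      · exact absurd h hx.2
      · exact h
    have hcard : m - 1 ≤ (T.erase j).card := hc ▸ Finset.pred_card_le_card_erase
    obtain ⟨t, hts, htc⟩ := Finset.exists_subset_card_eq hcard
    exact ⟨t, htc, fun x hx => herase (hts hx)⟩
  · rintro ⟨T, hc, hsub⟩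
    have hjT : j ∉ T := fun h => hj (hsub h)
    refine ⟨insert j T, ?_, ?_⟩
    · rw [Finset.card_insert_of_notMem hjT, hc]; omega
    · intro x hx
      simp only [Finset.coe_insert, Set.mem_insert_iff] at hx ⊢
      exact hx.imp id (fun h => hsub h)

lemma countLT_iff_finset {V Ed C R : Type} (G : LDGraph V Ed C R) (r : R)
    (P : Set V) (m : ℕ) (n : V) :
    countLT G r P m n ↔
      ¬ ∃ T : Finset V, T.card = m ∧ ↑T ⊆ {x | (n, x) ∈ roleInterp G r ∧ x ∈ P} := by
  unfold countLT
  rw [← hasInj_iff_finset]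
  constructor
  · rintro h ⟨f, hf, hm⟩; exact h ⟨f, hf, fun k => hm k⟩
  · rintro h ⟨f, hf, hm⟩; exact h ⟨f, hf, fun k => hm k⟩

/-- The effect of edge addition on counting quantifiers, where `P` stands for the
extension `φ^{G[add_E(e,i,j,R)]}` of the qualifying concept after the action:
if the added edge makes `j` a new `R`-successor of `i` (i.e. `(i,j) ∉ R^G`), then
for `n = i`, when `j ∈ P` the count threshold drops by one, and otherwise it is
unchanged; for `n ≠ i` nothing changes. -/
theorem count_subst_addE {V Ed C R : Type} [DecidableEq Ed]
    (G : LDGraph V Ed C R) (e : Ed) (i j : V) (r : R)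
    (he : e ∉ G.E) (hne : (i, j) ∉ roleInterp G r) (P : Set V) (m : ℕ) :
    (j ∈ P → (countLT (G.addE e i j r) r P m i ↔ countLT G r P (m - 1) i)) ∧
    (j ∉ P → (countLT (G.addE e i j r) r P m i ↔ countLT G r P m i)) ∧
    (∀ n : V, n ≠ i → (countLT (G.addE e i j r) r P m n ↔ countLT G r P m n)) := by
  have key : ∀ n x : V, (n, x) ∈ roleInterp (G.addE e i j r) r ↔
      (n = i ∧ x = j) ∨ (n, x) ∈ roleInterp G r := by
    intro n x
    rw [mem_roleInterp_addE' G e i j r he]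
    simp [Prod.ext_iff]
  refine ⟨?_, ?_, ?_⟩
  · intro hjP
    rcases Nat.eq_zero_or_pos m with rfl | hm
    · simp only [Nat.zero_sub]
      constructor <;> intro h <;>
        exact absurd ⟨Fin.elim0, fun a b h => a.elim0, fun k => k.elim0⟩ h
    · rw [countLT_iff_finset, countLT_iff_finset]
      have hset : {x | (i, x) ∈ roleInterp (G.addE e i j r) r ∧ x ∈ P}
          = insert j {x | (i, x) ∈ roleInterp G r ∧ x ∈ P} := by
        ext x
        simp only [Set.mem_setOf_eq, Set.mem_insert_iff, key]
        constructor
        · rintro ⟨(⟨_, rfl⟩ | h), hP⟩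
          · exact Or.inl rfl
          · exact Or.inr ⟨h, hP⟩
        · rintro (rfl | ⟨h, hP⟩)
          · exact ⟨by tauto, hjP⟩
          · exact ⟨Or.inr h, hP⟩
      have hj : j ∉ {x | (i, x) ∈ roleInterp G r ∧ x ∈ P} := fun h => hne h.1
      rw [hset, finset_insert_shift _ j hj m hm]
  · intro hjP
    have hset : {x | (i, x) ∈ roleInterp (G.addE e i j r) r ∧ x ∈ P}
        = {x | (i, x) ∈ roleInterp G r ∧ x ∈ P} := by
      ext x
      simp only [Set.mem_setOf_eq, key]
      constructor
      · rintro ⟨(⟨_, rfl⟩ | h), hP⟩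
        · exact absurd hP hjP
        · exact ⟨h, hP⟩
      · rintro ⟨h, hP⟩; exact ⟨Or.inr h, hP⟩
    rw [countLT_iff_finset, countLT_iff_finset, hset]
  · intro n hn
    have hset : {x | (n, x) ∈ roleInterp (G.addE e i j r) r ∧ x ∈ P}
        = {x | (n, x) ∈ roleInterp G r ∧ x ∈ P} := by
      ext x
      simp only [Set.mem_setOf_eq, key]
      constructor
      · rintro ⟨(⟨rfl, rfl⟩ | h), hP⟩
        · exact absurd rfl hn
        · exact ⟨h, hP⟩
      · rintro ⟨h, hP⟩; exact ⟨Or.inr h, hP⟩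
    rw [countLT_iff_finset, countLT_iff_finset, hset]
end
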